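/- arXiv:2303.01095 — 2 statements merged into one kernel-verified Lean document; each statement's English description precedes it below -/
import Mathlib

section
/- Let A be a real positive semidefinite n×n matrix, b a vector in R^n, and x a vector satisfying A x = b with xᵀb ≠ 0. Then for every positive semidefinite matrix X satisfying ⟨bbᵀ, X⟩ = 1 (where ⟨A,B⟩ = tr(AᵀB)), one has ⟨A, X⟩ ≥ 1/(xᵀb); moreover, X₀ = x xᵀ/(xᵀb)² is feasible (i.e., ⟨bbᵀ, X₀⟩ = 1, X₀ ⪰ 0) and achieves ⟨A, X₀⟩ = 1/(xᵀb). -/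
open Matrix

open scoped MatrixOrder in
private lemma psd_eq_ct_mul_self {n : ℕ} {A : Matrix (Fin n) (Fin n) ℝ} (hA : A.PosSemidef) :
    ∃ B : Matrix (Fin n) (Fin n) ℝ, A = Bᴴ * B := by
  obtain ⟨B, hB⟩ := CStarAlgebra.nonneg_iff_eq_star_mul_self.mp hA.nonneg
  exact ⟨B, hB⟩

private lemma tr_help {n : ℕ} (M N : Matrix (Fin n) (Fin n) ℝ) :
    (Mᵀ * N).trace = ∑ i, ∑ j, M j i * N j i := by
  simp [Matrix.trace, Matrix.mul_apply, Matrix.diag]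

private lemma tr_right_vmv {n : ℕ} (M : Matrix (Fin n) (Fin n) ℝ) (x y : Fin n → ℝ) :
    (Mᵀ * Matrix.vecMulVec x y).trace = x ⬝ᵥ (M.mulVec y) := by
  rw [tr_help]
  simp only [Matrix.vecMulVec_apply, Matrix.mulVec, dotProduct]
  rw [Finset.sum_comm]
  refine Finset.sum_congr rfl fun j _ => ?_
  rw [Finset.mul_sum]
  exact Finset.sum_congr rfl fun i _ => by ring

private lemma tr_vecMulVec {n : ℕ} (b : Fin n → ℝ) (X : Matrix (Fin n) (Fin n) ℝ) :
    ((Matrix.vecMulVec b b)ᵀ * X).trace = b ⬝ᵥ (X.mulVec b) := by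
  rw [tr_help]
  simp only [Matrix.vecMulVec_apply, Matrix.mulVec, dotProduct]
  rw [Finset.sum_comm]
  refine Finset.sum_congr rfl fun j _ => ?_
  rw [Finset.mul_sum]
  exact Finset.sum_congr rfl fun i _ => by ring

private lemma vmv_mulVec {n : ℕ} (x v : Fin n → ℝ) :
    (Matrix.vecMulVec x x).mulVec v = (x ⬝ᵥ v) • x := by
  ext i
  simp only [Matrix.mulVec, dotProduct, Matrix.vecMulVec_apply, Pi.smul_apply,
    smul_eq_mul]
  rw [Finset.sum_mul]
  exact Finset.sum_congr rfl fun j _ => by ring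

theorem stmt_0 (n : ℕ) (A : Matrix (Fin n) (Fin n) ℝ) (b x : Fin n → ℝ)
    (hA : A.PosSemidef) (hx : A.mulVec x = b) (hxb : x ⬝ᵥ b ≠ 0) :
    (∀ X : Matrix (Fin n) (Fin n) ℝ, X.PosSemidef →
      ((Matrix.vecMulVec b b)ᵀ * X).trace = 1 →
      1 / (x ⬝ᵥ b) ≤ (Aᵀ * X).trace) ∧
    ((((x ⬝ᵥ b)^2)⁻¹ • Matrix.vecMulVec x x).PosSemidef ∧
      ((Matrix.vecMulVec b b)ᵀ * (((x ⬝ᵥ b)^2)⁻¹ • Matrix.vecMulVec x x)).trace = 1 ∧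
      (Aᵀ * (((x ⬝ᵥ b)^2)⁻¹ • Matrix.vecMulVec x x)).trace = 1 / (x ⬝ᵥ b)) := by
  have hc : (0:ℝ) ≤ ((x ⬝ᵥ b)^2)⁻¹ := inv_nonneg.mpr (sq_nonneg _)
  have hsq : ((x ⬝ᵥ b)^2) ≠ 0 := pow_ne_zero _ hxb
  refine ⟨?_, ⟨?_, ?_⟩, ?_, ?_⟩
  · -- main inequality
    intro X hX hfeas
    obtain ⟨B, hB⟩ := psd_eq_ct_mul_self hA
    obtain ⟨E, hE⟩ := psd_eq_ct_mul_self hX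
    rw [show (Bᴴ : Matrix (Fin n) (Fin n) ℝ) = Bᵀ by ext i j; simp [conjTranspose]] at hB
    rw [show (Eᴴ : Matrix (Fin n) (Fin n) ℝ) = Eᵀ by ext i j; simp [conjTranspose]] at hE
    set u : Fin n → ℝ := B.mulVec x with hu
    set P : Matrix (Fin n) (Fin n) ℝ := E * Bᵀ with hP
    have h3 : x ⬝ᵥ b = u ⬝ᵥ u := by
      rw [← hx, hB, ← Matrix.mulVec_mulVec, Matrix.dotProduct_mulVec, Matrix.vecMul_transpose]
    have h4 : E.mulVec b = P.mulVec u := by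
      rw [← hx, hB, ← Matrix.mulVec_mulVec, ← Matrix.mulVec_mulVec]
    have h1 : (1:ℝ) = ∑ l, (P.mulVec u l)^2 := by
      rw [← hfeas, tr_vecMulVec, hE, ← Matrix.mulVec_mulVec, Matrix.dotProduct_mulVec,
        Matrix.vecMul_transpose, h4]
      simp [dotProduct, sq]
    have h2 : (Aᵀ * X).trace = ∑ l, ∑ k, (P l k)^2 := by
      have c1 : (Aᵀ * X).trace = ((B * (Eᵀ * E)) * Bᵀ).trace := by
        rw [hB, hE, Matrix.transpose_mul, Matrix.transpose_transpose, mul_assoc,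
          Matrix.trace_mul_comm]
      have c2 : (B * (Eᵀ * E)) * Bᵀ = Pᵀ * P := by
        rw [hP, Matrix.transpose_mul, Matrix.transpose_transpose]
        noncomm_ring
      rw [c1, c2, tr_help, Finset.sum_comm]
      simp [sq]
    have hCS : (1:ℝ) ≤ (Aᵀ * X).trace * (x ⬝ᵥ b) := by
      rw [h1, h2, h3, Finset.sum_mul]
      refine Finset.sum_le_sum fun l _ => ?_
      have := Finset.sum_mul_sq_le_sq_mul_sq Finset.univ (fun k => P l k) u
      simpa [Matrix.mulVec, dotProduct, sq] using this
    have hnn : 0 ≤ x ⬝ᵥ b := by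
      rw [h3, dotProduct]
      exact Finset.sum_nonneg fun i _ => mul_self_nonneg _
    have hpos : 0 < x ⬝ᵥ b := hnn.lt_of_ne (Ne.symm hxb)
    rw [div_le_iff₀ hpos]
    linarith
  · -- X₀ is Hermitian
    ext i j
    simp [Matrix.conjTranspose, Matrix.vecMulVec_apply, mul_comm]
  · -- X₀ is PSD (quadratic form nonneg)
    suffices h : ∀ v, 0 ≤ star v ⬝ᵥ ((((x ⬝ᵥ b)^2)⁻¹ • Matrix.vecMulVec x x) *ᵥ v) from
      fun w => by simpa [dotProduct, mulVec, Finsupp.sum_fintype, Finset.mul_sum, mul_assoc] using h w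
    intro v
    rw [Matrix.smul_mulVec, vmv_mulVec]
    simp only [star_trivial, dotProduct_smul, smul_eq_mul]
    have : x ⬝ᵥ v * (v ⬝ᵥ x) = (x ⬝ᵥ v)^2 := by rw [dotProduct_comm v x]; ring
    rw [this]
    positivity
  · -- feasibility of X₀
    rw [Matrix.mul_smul, Matrix.trace_smul, tr_right_vmv, vmv_mulVec]
    simp only [dotProduct_smul, smul_eq_mul]
    rw [dotProduct_comm b x]
    field_simp
  · -- objective value of X₀
    rw [Matrix.mul_smul, Matrix.trace_smul, tr_right_vmv, hx]
    rw [sq]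
    simp only [smul_eq_mul]
    field_simp
end

section
/- Fix j ∈ {1,…,n} and y ∈ R^n with all y_i nonzero and |y_i| pairwise distinct. Then Σ_{σ ∈ {±1}^n} (1 − e^{−2πi σ_j y_j}) / (σ_j y_j ∏_{i≠j}(σ_j y_j − σ_i y_i)) = Σ_{σ ∈ {±1}} (2σ y_j)^{n−1} (1 − e^{−2πi σ y_j}) / (σ y_j ∏_{i≠j}(y_j² − y_i²)). -/
open Real

/-- Sign associated to a boolean: `true ↦ 1`, `false ↦ -1`. -/
def bsgn (b : Bool) : ℝ := if b then 1 else -1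

theorem stmt_13 (n : ℕ) (j : Fin n) (y : Fin n → ℝ)
    (hy : ∀ i, y i ≠ 0) (hy' : ∀ i k, i ≠ k → |y i| ≠ |y k|) :
    ∑ σ : Fin n → Bool,
        (1 - Complex.exp (-2 * π * Complex.I * (bsgn (σ j) * y j : ℝ))) /
          ((bsgn (σ j) * y j : ℝ) *
            ∏ i ∈ Finset.univ.erase j,
              ((bsgn (σ j) * y j : ℝ) - (bsgn (σ i) * y i : ℝ) : ℂ))
      = ∑ σ : Bool,
          ((2 * bsgn σ * y j : ℝ) : ℂ)^(n-1) *
            (1 - Complex.exp (-2 * π * Complex.I * (bsgn σ * y j : ℝ))) /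
              ((bsgn σ * y j : ℝ) *
                ∏ i ∈ Finset.univ.erase j, (((y j : ℂ))^2 - ((y i : ℂ))^2)) := by
  classical
  have hmem : ∀ x : Fin n, x ∈ Finset.univ.erase j ↔ x ≠ j := by
    intro x; simp [Finset.mem_erase]
  -- basic nonvanishing facts
  have habs : ∀ (b : Bool) (i : Fin n), |bsgn b * y i| = |y i| := by
    intro b i; cases b <;> simp [bsgn, abs_mul]
  have hA : ∀ b : Bool, ((bsgn b * y j : ℝ) : ℂ) ≠ 0 := by
    intro b
    simp only [ne_eq, Complex.ofReal_eq_zero]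
    cases b <;> simp [bsgn, hy j]
  have hsq : ∀ i : Fin n, i ≠ j → ((y j : ℂ)^2 - (y i : ℂ)^2) ≠ 0 := by
    intro i hij
    have h1 : |y j| ≠ |y i| := hy' j i (Ne.symm hij)
    have h2 : (y j)^2 ≠ (y i)^2 := by
      intro h
      apply h1
      rw [← Real.sqrt_sq_eq_abs, ← Real.sqrt_sq_eq_abs, h]
    rw [sub_ne_zero]
    intro h
    apply h2
    have := congrArg Complex.re h
    exact_mod_cast h
  have hfacne : ∀ (b s : Bool) (i : Fin n), i ≠ j →
      (((bsgn b * y j : ℝ) : ℂ) - ((bsgn s * y i : ℝ) : ℂ)) ≠ 0 := by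
    intro b s i hij
    rw [sub_ne_zero]
    intro h
    have h' : (bsgn b * y j : ℝ) = (bsgn s * y i : ℝ) := by exact_mod_cast h
    apply hy' j i (Ne.symm hij)
    rw [← habs b j, ← habs s i, h']
  -- rewrite products over `erase j` as products over the subtype
  have step1 : ∀ (σ : Fin n → Bool),
      (∏ i ∈ Finset.univ.erase j,
        (((bsgn (σ j) * y j : ℝ) : ℂ) - ((bsgn (σ i) * y i : ℝ) : ℂ)))
      = ∏ i : {i : Fin n // i ≠ j},
          (((bsgn (σ j) * y j : ℝ) : ℂ) - ((bsgn (σ i.1) * y i.1 : ℝ) : ℂ)) := by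
    intro σ
    exact (Finset.prod_subtype _ hmem _)
  have step2 :
      (∏ i ∈ Finset.univ.erase j, ((y j : ℂ)^2 - (y i : ℂ)^2))
      = ∏ i : {i : Fin n // i ≠ j}, ((y j : ℂ)^2 - (y i.1 : ℂ)^2) :=
    Finset.prod_subtype _ hmem _
  have hP : (∏ i : {i : Fin n // i ≠ j}, ((y j : ℂ)^2 - (y i.1 : ℂ)^2)) ≠ 0 :=
    Finset.prod_ne_zero_iff.2 fun i _ => hsq i.1 i.2
  have hcard : Fintype.card {i : Fin n // i ≠ j} = n - 1 := by
    rw [Fintype.card_subtype]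
    rw [show (Finset.filter (fun i => i ≠ j) Finset.univ) = Finset.univ.erase j by
      ext x; simp [Finset.mem_erase, and_comm]]
    rw [Finset.card_erase_of_mem (Finset.mem_univ j), Finset.card_univ, Fintype.card_fin]
  simp only [step1, step2]
  rw [← Equiv.sum_comp (Equiv.funSplitAt j Bool).symm, Fintype.sum_prod_type]
  refine Finset.sum_congr rfl fun b _ => ?_
  have happj : ∀ τ : {i : Fin n // i ≠ j} → Bool,
      (Equiv.funSplitAt j Bool).symm (b, τ) j = b := by
    intro τ; rw [Equiv.funSplitAt_symm_apply, dif_pos rfl]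
  have happ : ∀ (τ : {i : Fin n // i ≠ j} → Bool) (i : {i : Fin n // i ≠ j}),
      (Equiv.funSplitAt j Bool).symm (b, τ) i.1 = τ i := by
    intro τ i; rw [Equiv.funSplitAt_symm_apply, dif_neg i.2, Subtype.coe_eta]
  simp only [happj, happ]
  set A : ℂ := ((bsgn b * y j : ℝ) : ℂ) with hAdef
  set C : ℂ := (1 - Complex.exp (-2 * π * Complex.I * (bsgn b * y j : ℝ))) with hCdef
  have key : ∀ τ : {i : Fin n // i ≠ j} → Bool,
      C / (A * ∏ i : {i : Fin n // i ≠ j}, (A - ((bsgn (τ i) * y i.1 : ℝ) : ℂ)))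
      = (C / A) * ∏ i : {i : Fin n // i ≠ j}, (A - ((bsgn (τ i) * y i.1 : ℝ) : ℂ))⁻¹ := by
    intro τ
    rw [div_mul_eq_div_div, div_eq_mul_inv (C / A), ← Finset.prod_inv_distrib]
  simp only [key]
  rw [← Finset.mul_sum, ← Fintype.prod_sum fun (i : {i : Fin n // i ≠ j}) (s : Bool) =>
    (A - ((bsgn s * y i.1 : ℝ) : ℂ))⁻¹]
  have hA2 : A ^ 2 = (y j : ℂ) ^ 2 := by
    rw [hAdef]; push_cast; cases b <;> simp [bsgn]
  have hfac : ∀ i : {i : Fin n // i ≠ j},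
      (∑ s : Bool, (A - ((bsgn s * y i.1 : ℝ) : ℂ))⁻¹)
      = (2 * A) * ((y j : ℂ)^2 - (y i.1 : ℂ)^2)⁻¹ := by
    intro i
    have h1 : A - ((bsgn true * y i.1 : ℝ) : ℂ) ≠ 0 := hfacne b true i.1 i.2
    have h2 : A - ((bsgn false * y i.1 : ℝ) : ℂ) ≠ 0 := hfacne b false i.1 i.2
    have hc1 : ((bsgn true * y i.1 : ℝ) : ℂ) = (y i.1 : ℂ) := by norm_num [bsgn]
    have hc0 : ((bsgn false * y i.1 : ℝ) : ℂ) = -(y i.1 : ℂ) := by push_cast [bsgn]; ring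
    rw [Fintype.sum_bool, inv_add_inv h1 h2, hc1, hc0]
    have e1 : (A - (y i.1 : ℂ)) + (A - -(y i.1 : ℂ)) = 2 * A := by ring
    have e2 : (A - (y i.1 : ℂ)) * (A - -(y i.1 : ℂ)) = (y j : ℂ)^2 - (y i.1 : ℂ)^2 := by
      rw [← hA2]; ring
    rw [e1, e2, div_eq_mul_inv]
  simp only [hfac]
  rw [Finset.prod_mul_distrib, Finset.prod_const, Finset.prod_inv_distrib,
    Finset.card_univ, hcard]
  have h2A : ((2 * bsgn b * y j : ℝ) : ℂ) = 2 * A := by rw [hAdef]; push_cast; ring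
  rw [h2A]
  field_simp [hA b, hP]
end
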